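/- Let Ω be an open connected subset of ℂ which contains 0 and is rotation invariant (α·z ∈ Ω whenever z ∈ Ω and |α| = 1). Let α ∈ ℂ with |α| = 1, let w : Ω → ℂ be analytic and not identically 0, and suppose λ ∈ ℂ and x : Ω → ℂ is analytic, not identically 0, with w(z)·x(α·z) = λ·x(z) for all z ∈ Ω. Then: (a) for every R > 0 such that the open disc {z : |z| < R} is contained in Ω, w has no zeros in that disc; and (b) there exists an integer k ≥ 0 such that λ = αᵏ·w(0). -/

import Mathlib

open Filter Topology

private lemma mul_eq_zero_aux {Ω : Set ℂ} (hΩo : IsOpen Ω) (hΩc : IsPreconnected Ω)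
    {f g : ℂ → ℂ} (hf : AnalyticOnNhd ℂ f Ω) (hg : AnalyticOnNhd ℂ g Ω)
    (h : ∀ z ∈ Ω, f z * g z = 0) :
    (∀ z ∈ Ω, f z = 0) ∨ ∀ z ∈ Ω, g z = 0 := by
  by_cases hfz : ∀ z ∈ Ω, f z = 0
  · exact Or.inl hfz
  · push_neg at hfz
    obtain ⟨z₁, hz₁, hf1⟩ := hfz
    right
    have hev : ∀ᶠ z in 𝓝 z₁, g z = 0 := by
      have h1 : ∀ᶠ z in 𝓝 z₁, f z ≠ 0 :=
        (hf z₁ hz₁).continuousAt.eventually_ne hf1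
      filter_upwards [h1, hΩo.mem_nhds hz₁] with z hz hzΩ
      exact (mul_eq_zero.mp (h z hzΩ)).resolve_left hz
    intro z hz
    exact hg.eqOn_zero_of_preconnected_of_eventuallyEq_zero hΩc hz₁ hev hz

theorem statement_15 (Ω : Set ℂ) (hΩo : IsOpen Ω) (hΩc : IsConnected Ω) (h0 : (0 : ℂ) ∈ Ω)
    -- Ω is rotation invariant
    (hΩrot : ∀ z ∈ Ω, ∀ a : ℂ, ‖a‖ = 1 → a * z ∈ Ω)
    (α : ℂ) (hα : ‖α‖ = 1)
    (w : ℂ → ℂ) (hwa : DifferentiableOn ℂ w Ω) (hw0 : ∃ z ∈ Ω, w z ≠ 0)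
    (l : ℂ) (x : ℂ → ℂ) (hxa : DifferentiableOn ℂ x Ω) (hx0 : ∃ z ∈ Ω, x z ≠ 0)
    (heig : ∀ z ∈ Ω, w z * x (α * z) = l * x z) :
    (∀ R : ℝ, 0 < R → Metric.ball (0 : ℂ) R ⊆ Ω →
        ∀ z ∈ Metric.ball (0 : ℂ) R, w z ≠ 0) ∧
      ∃ k : ℕ, l = α ^ k * w 0 := by
  have hΩpc : IsPreconnected Ω := hΩc.isPreconnected
  have hwA : AnalyticOnNhd ℂ w Ω := hwa.analyticOnNhd hΩo
  have hxA : AnalyticOnNhd ℂ x Ω := hxa.analyticOnNhd hΩo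
  obtain ⟨z₁, hz₁, hx1⟩ := hx0
  have hα0 : α ≠ 0 := fun h => by simp [h] at hα
  have hαinv : ‖α⁻¹‖ = 1 := by rw [norm_inv, hα]; norm_num
  have hpowmem : ∀ (a : ℂ), ‖a‖ = 1 → ∀ (j : ℕ), ∀ z ∈ Ω, a ^ j * z ∈ Ω := by
    intro a ha j z hz
    exact hΩrot z hz _ (by rw [norm_pow, ha, one_pow])
  -- shifted x is not identically zero
  have hxshift : ∀ n : ℕ, ¬ ∀ z ∈ Ω, x (α ^ n * z) = 0 := by
    intro n hn
    apply hx1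
    have hmem : (α⁻¹) ^ n * z₁ ∈ Ω := hpowmem α⁻¹ hαinv n z₁ hz₁
    have := hn _ hmem
    rwa [← mul_assoc, ← mul_pow, mul_inv_cancel₀ hα0, one_pow, one_mul] at this
  have hxshiftA : ∀ n : ℕ, AnalyticOnNhd ℂ (fun z => x (α ^ n * z)) Ω := by
    intro n z hz
    exact (hxA _ (hpowmem α hα n z hz)).comp (analyticAt_const.mul analyticAt_id)
  have hwshiftA : ∀ n : ℕ, AnalyticOnNhd ℂ (fun z => w (α ^ n * z)) Ω := by
    intro n z hz
    exact (hwA _ (hpowmem α hα n z hz)).comp (analyticAt_const.mul analyticAt_id)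
  -- l ≠ 0
  have hl : l ≠ 0 := by
    intro hl0
    have hz : ∀ z ∈ Ω, w z * x (α * z) = 0 := by
      intro z hz; rw [heig z hz, hl0, zero_mul]
    rcases mul_eq_zero_aux hΩo hΩpc hwA (by simpa using hxshiftA 1) hz with h | h
    · obtain ⟨z₂, hz₂, hw2⟩ := hw0; exact hw2 (h z₂ hz₂)
    · exact hxshift 1 (by simpa using h)
  -- part (b)
  have hx0A : AnalyticAt ℂ x 0 := hxA 0 h0
  have hord : analyticOrderAt x 0 ≠ ⊤ := by
    intro h
    rw [analyticOrderAt_eq_top] at h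
    exact hx1 (hxA.eqOn_zero_of_preconnected_of_eventuallyEq_zero hΩpc h0 h hz₁)
  obtain ⟨k, hk⟩ := WithTop.ne_top_iff_exists.mp hord
  obtain ⟨g, hgA, hg0, hgeq⟩ := (hx0A.analyticOrderAt_eq_natCast (n := k)).mp hk.symm
  have hgeq2 : ∀ᶠ z in 𝓝 (0:ℂ), x z = z ^ k * g z := by
    filter_upwards [hgeq] with z hz
    simpa [smul_eq_mul] using hz
  have hbval : l = α ^ k * w 0 := by
    have htend : Tendsto (fun z : ℂ => α * z) (𝓝 0) (𝓝 0) := by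
      simpa using (continuous_const.fun_mul continuous_id' : Continuous fun z : ℂ => α * z).tendsto (0 : ℂ)
    have hgeq' : ∀ᶠ z in 𝓝 (0:ℂ), x (α * z) = (α * z) ^ k * g (α * z) :=
      htend.eventually hgeq2
    have hbig : ∀ᶠ z in 𝓝 (0:ℂ),
        z ^ k * (w z * α ^ k * g (α * z)) = z ^ k * (l * g z) := by
      filter_upwards [hgeq2, hgeq', hΩo.mem_nhds h0] with z h1 h2 hzΩ
      have h3 := heig z hzΩ
      rw [h1, h2] at h3
      linear_combination h3
    have hkey : ∀ᶠ z in 𝓝[≠] (0:ℂ), w z * α ^ k * g (α * z) = l * g z := by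
      filter_upwards [hbig.filter_mono nhdsWithin_le_nhds, self_mem_nhdsWithin] with z hz hz0
      exact mul_left_cancel₀ (pow_ne_zero k hz0) hz
    have hcw : ContinuousAt w 0 := (hwA 0 h0).continuousAt
    have hcg : ContinuousAt g 0 := hgA.continuousAt
    have hcgα : ContinuousAt (fun z : ℂ => g (α * z)) 0 := by
      have h1 : ContinuousAt g (α * 0) := by simpa using hcg
      exact h1.comp (continuous_const.mul continuous_id).continuousAt
    have t1 : Tendsto (fun z => w z * α ^ k * g (α * z)) (𝓝[≠] (0:ℂ))
        (𝓝 (w 0 * α ^ k * g (α * 0))) :=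
      ((hcw.mul continuousAt_const).mul hcgα).tendsto.mono_left nhdsWithin_le_nhds
    have t2 : Tendsto (fun z => w z * α ^ k * g (α * z)) (𝓝[≠] (0:ℂ))
        (𝓝 (l * g 0)) := by
      have hkey' : (fun z => w z * α ^ k * g (α * z)) =ᶠ[𝓝[≠] (0:ℂ)]
          (fun z => l * g z) := hkey
      refine Tendsto.congr' hkey'.symm ?_
      exact (continuousAt_const.mul hcg).tendsto.mono_left nhdsWithin_le_nhds
    have heq : w 0 * α ^ k * g (α * 0) = l * g 0 := tendsto_nhds_unique t1 t2
    rw [mul_zero] at heq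
    have h4 : w 0 * α ^ k = l := mul_right_cancel₀ hg0 heq
    rw [← h4]; ring
  refine ⟨?_, k, hbval⟩
  -- part (a)
  intro R hR hball z₀ hz₀ hwz₀
  have hz₀Ω : z₀ ∈ Ω := hball hz₀
  by_cases hroot : ∃ m : ℕ, 0 < m ∧ α ^ m = 1
  · -- α is a root of unity : use the product trick
    obtain ⟨m, hm, hαm⟩ := hroot
    set W : ℂ → ℂ := fun z => ∏ j ∈ Finset.range m, w (α ^ j * z) with hW
    set X : ℂ → ℂ := fun z => ∏ j ∈ Finset.range m, x (α ^ j * z) with hX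
    have hXA : AnalyticOnNhd ℂ X Ω := fun z hz =>
      Finset.analyticAt_fun_prod _ (fun j _ => hxshiftA j z hz)
    have hWA : AnalyticOnNhd ℂ (fun z => W z - l ^ m) Ω := fun z hz =>
      ((Finset.analyticAt_fun_prod _ (fun j _ => hwshiftA j z hz)).sub analyticAt_const)
    have hrel : ∀ z ∈ Ω, (W z - l ^ m) * X z = 0 := by
      intro z hz
      have hfact : ∀ j : ℕ, w (α ^ j * z) * x (α ^ (j+1) * z) = l * x (α ^ j * z) := by
        intro j
        have h1 := heig (α ^ j * z) (hpowmem α hα j z hz)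
        rw [← mul_assoc, ← pow_succ'] at h1
        exact h1
      have hprod : W z * ∏ j ∈ Finset.range m, x (α ^ (j+1) * z) = l ^ m * X z := by
        calc W z * ∏ j ∈ Finset.range m, x (α ^ (j+1) * z)
            = ∏ j ∈ Finset.range m, (w (α ^ j * z) * x (α ^ (j+1) * z)) :=
              (Finset.prod_mul_distrib).symm
          _ = ∏ j ∈ Finset.range m, (l * x (α ^ j * z)) :=
              Finset.prod_congr rfl fun j _ => hfact j
          _ = l ^ m * X z := by
              rw [Finset.prod_mul_distrib, Finset.prod_const, Finset.card_range]
      have hshift : ∏ j ∈ Finset.range m, x (α ^ (j+1) * z) = X z := by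
        obtain ⟨d, rfl⟩ : ∃ d, m = d + 1 := ⟨m - 1, (Nat.succ_pred_eq_of_pos hm).symm⟩
        have hlast : x (α ^ (d+1) * z) = x (α ^ (0:ℕ) * z) := by
          rw [hαm, pow_zero]
        simp only [hX]
        rw [Finset.prod_range_succ, Finset.prod_range_succ', hlast]
      have h5 : W z * X z = l ^ m * X z := by
        conv_lhs => rw [← hshift]
        exact hprod
      rw [sub_mul, h5, sub_self]
    rcases mul_eq_zero_aux hΩo hΩpc hWA hXA hrel with h | h
    · have h₀ := h z₀ hz₀Ω
      have hW0 : W z₀ = 0 := by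
        refine Finset.prod_eq_zero (Finset.mem_range.mpr hm) ?_
        rw [pow_zero, one_mul]; exact hwz₀
      rw [hW0, zero_sub, neg_eq_zero] at h₀
      exact hl ((pow_eq_zero_iff hm.ne').mp h₀)
    · have claim : ∀ n : ℕ, (∀ z ∈ Ω, ∏ j ∈ Finset.range n, x (α ^ j * z) = 0) → False := by
        intro n
        induction n with
        | zero => intro hn; simpa using hn 0 h0
        | succ n ih =>
          intro hn
          have h' : ∀ z ∈ Ω, (∏ j ∈ Finset.range n, x (α ^ j * z)) * x (α ^ n * z) = 0 := by
            intro z hz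
            rw [← Finset.prod_range_succ]
            exact hn z hz
          rcases mul_eq_zero_aux hΩo hΩpc
            (fun z hz => Finset.analyticAt_fun_prod _ fun j _ => hxshiftA j z hz)
            (hxshiftA n) h' with h'' | h''
          · exact ih h''
          · exact hxshift n h''
      exact claim m h
  · -- α is not a root of unity : accumulation of zeros
    have hz₀ne : z₀ ≠ 0 := by
      intro h
      subst h
      exact hl (by rw [hbval, hwz₀, mul_zero])
    set u : ℕ → ℂ := fun n => (α⁻¹) ^ n * z₀ with hu
    have hnormu : ∀ n, ‖u n‖ = ‖z₀‖ := by
      intro n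
      simp only [hu, norm_mul, norm_pow, norm_inv, hα, inv_one, one_pow, one_mul]
    have hz₀R : ‖z₀‖ < R := by rwa [Metric.mem_ball, dist_zero_right] at hz₀
    have humem : ∀ n, u n ∈ Metric.ball (0:ℂ) R := by
      intro n
      rw [Metric.mem_ball, dist_zero_right, hnormu]
      exact hz₀R
    have hxu : ∀ n, x (u n) = 0 := by
      intro n
      induction n with
      | zero =>
        have h1 := heig z₀ hz₀Ω
        rw [hwz₀, zero_mul] at h1
        have h2 := (mul_eq_zero.mp h1.symm).resolve_left hl
        simpa [hu] using h2
      | succ n ih =>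
        have hmem := hball (humem (n+1))
        have h1 := heig (u (n+1)) hmem
        have hstep : α * u (n+1) = u n := by
          simp only [hu]
          rw [pow_succ', ← mul_assoc, ← mul_assoc, mul_inv_cancel₀ hα0, one_mul]
        rw [hstep, ih, mul_zero] at h1
        exact (mul_eq_zero.mp h1.symm).resolve_left hl
    have key : ∀ a b : ℕ, a < b → u a ≠ u b := by
      intro a b hlt hab
      apply hroot
      refine ⟨b - a, by omega, ?_⟩
      have h1 : (α⁻¹) ^ a = (α⁻¹) ^ b := mul_right_cancel₀ hz₀ne hab
      have h2 : (α⁻¹) ^ b = (α⁻¹) ^ a * (α⁻¹) ^ (b - a) := by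
        rw [← pow_add]; congr 1; omega
      rw [h2] at h1
      have hpne : (α⁻¹ : ℂ) ^ a ≠ 0 := pow_ne_zero _ (inv_ne_zero hα0)
      have h3 : (1:ℂ) = (α⁻¹) ^ (b - a) :=
        mul_left_cancel₀ hpne (by rw [mul_one]; exact h1)
      rw [inv_pow] at h3
      exact inv_eq_one.mp h3.symm
    have huinj : Function.Injective u := by
      intro a b hab
      by_contra hne
      rcases Ne.lt_or_gt hne with h | h
      · exact key a b h hab
      · exact key b a h hab.symm
    have hSinf : (Set.range u).Infinite := Set.infinite_range_of_injective huinj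
    have hsub : Set.range u ⊆ Metric.sphere (0:ℂ) ‖z₀‖ := by
      rintro _ ⟨n, rfl⟩
      rw [mem_sphere_zero_iff_norm]
      exact hnormu n
    obtain ⟨p, hpK, hacc⟩ :=
      hSinf.exists_accPt_of_subset_isCompact (isCompact_sphere 0 ‖z₀‖) hsub
    have hpΩ : p ∈ Ω := by
      apply hball
      rw [Metric.mem_ball, dist_zero_right]
      rw [mem_sphere_zero_iff_norm] at hpK
      rw [hpK]; exact hz₀R
    have hfreq : ∃ᶠ z in 𝓝[≠] p, x z = 0 := by
      have h1 := accPt_iff_frequently.mp hacc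
      rw [frequently_nhdsWithin_iff]
      apply h1.mono
      rintro z ⟨hzp, n, rfl⟩
      exact ⟨hxu n, hzp⟩
    exact hx1 (hxA.eqOn_zero_of_preconnected_of_frequently_eq_zero hΩpc hpΩ hfreq hz₁)
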